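/- Suppose the inverse demand function f_Γ is such that the map Γ ↦ (s − Γ) f_Γ′(Γ)/f_Γ(Γ) (which is ≤ 0) is nondecreasing on [0, s), and the risk-weight satisfies α ∈ ( −s f_Γ′(0)/((1 − s f_Γ′(0)) θ_min), 1/θ_min ). Then any solution Γ : [τ, T] → ℝ of the liquidation ODE Γ̇(t) = −Z(t,Γ(t)) f_t′(t) f_Γ(Γ(t)) / (1 + Z(t,Γ(t)) f_t(t) f_Γ′(Γ(t))) with initial condition Γ(τ) = 0 satisfies Γ(t) ∈ [0, s) and Γ̇(t) ≥ 0 for all times t ∈ [τ, T]. -/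

import Mathlib

open Set

section AuxLemmas
open Filter Topology

lemma deriv_nonpos_aux {f : ℝ → ℝ} {S : Set ℝ} {d x : ℝ} (hf : AntitoneOn f S)
    (hx : x ∈ S) (hS : Ioi x ⊆ S) (h : HasDerivAt f d x) : d ≤ 0 := by
  have h1 : HasDerivWithinAt f d (Ioi x) x := h.hasDerivWithinAt
  have hxs : x ∉ Ioi x := by simp
  have h2 : Filter.Tendsto (slope f x) (nhdsWithin x (Ioi x)) (nhds d) := by
    have := hasDerivWithinAt_iff_tendsto_slope.mp h1
    rwa [Set.diff_singleton_eq_self hxs] at this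
  refine le_of_tendsto h2 ?_
  filter_upwards [self_mem_nhdsWithin] with u hu
  have hfu : f u ≤ f x := hf hx (hS hu) (le_of_lt hu)
  rw [slope_def_field]
  exact div_nonpos_of_nonpos_of_nonneg (by linarith) (by simp at hu; linarith)

lemma alg_den (one_a sγ aa ftt fγ dfγ : ℝ) (ha : aa ≠ 0) (hft : ftt ≠ 0) (hfγ : fγ ≠ 0) :
    1 + (one_a * sγ) / (aa * ftt * fγ) * ftt * dfγ
      = 1 + (one_a / aa) * (sγ * dfγ / fγ) := by
  field_simp

lemma alg_num (one_a sγ aa ftt fγ dft : ℝ) (ha : aa ≠ 0) (hft : ftt ≠ 0) (hfγ : fγ ≠ 0) :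
    -((one_a * sγ) / (aa * ftt * fγ) * dft * fγ) = (one_a * sγ * (-dft)) / (aa * ftt) := by
  field_simp

end AuxLemmas

set_option maxHeartbeats 1000000

noncomputable section

/-- **Lemma 3.1 (single bank monotonicity).**
If the inverse demand function `fΓ` is such that `γ ↦ (s - γ) fΓ'(γ)/fΓ(γ)` is
nondecreasing on `[0, s)` and the risk-weight satisfies
`α ∈ (-(s fΓ'(0))/((1 - s fΓ'(0)) θmin), 1/θmin)`, then any solution
`Γ : [τ, T] → ℝ` of the liquidation ODE
`Γ̇(t) = -(Z(t,Γ(t)) ft'(t) fΓ(Γ(t))) / (1 + Z(t,Γ(t)) ft(t) fΓ'(Γ(t)))`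
with `Γ(τ) = 0` satisfies `Γ(t) ∈ [0, s)` and `Γ̇(t) ≥ 0` for all `t ∈ [τ, T]`. -/
theorem single_bank_monotone_liquidation
    (s α θmin τ T : ℝ)
    (hs : 0 < s)
    (hθmin : 0 < θmin) (hα : 0 < α) (hαθ : α * θmin < 1)
    (hτ : 0 ≤ τ) (hτT : τ ≤ T)
    (ft fΓ : ℝ → ℝ)
    (hftC : ContDiff ℝ 1 ft) (hftanti : AntitoneOn ft (Ici 0))
    (hftmem : ∀ t ∈ Ici (0 : ℝ), ft t ∈ Ioc (0 : ℝ) 1) (hft0 : ft 0 = 1)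
    (hfΓC : ContDiff ℝ 2 fΓ) (hfΓanti : Antitone fΓ)
    (hfΓpos : ∀ γ, 0 < fΓ γ) (hfΓ0 : fΓ 0 = 1)
    -- key assumption on the inverse demand function
    (hmono : MonotoneOn (fun γ => (s - γ) * deriv fΓ γ / fΓ γ) (Ico 0 s))
    -- key assumption on the risk-weight
    (hαmem : α ∈ Ioo (-(s * deriv fΓ 0) / ((1 - s * deriv fΓ 0) * θmin)) (1 / θmin))
    -- the map `Z`
    (Z : ℝ → ℝ → ℝ)
    (hZ : ∀ t γ, Z t γ =
      if τ ≤ t then ((1 - α * θmin) * (s - γ)) / (α * θmin * ft t * fΓ γ) else 0)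
    -- a solution of the liquidation ODE on `[τ, T]` with `Γ(τ) = 0`
    (Γ Γ' : ℝ → ℝ)
    (hΓτ : Γ τ = 0)
    (hderiv : ∀ t ∈ Icc τ T, HasDerivAt Γ (Γ' t) t)
    (hODE : ∀ t ∈ Icc τ T, Γ' t =
      -(Z t (Γ t) * deriv ft t * fΓ (Γ t)) /
        (1 + Z t (Γ t) * ft t * deriv fΓ (Γ t))) :
    ∀ t ∈ Icc τ T, Γ t ∈ Ico 0 s ∧ 0 ≤ Γ' t := by
  -- abbreviations
  have ha0 : 0 < α * θmin := mul_pos hα hθmin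
  have ha1 : α * θmin < 1 := hαθ
  set a : ℝ := α * θmin with ha_def
  set c : ℝ := (1 - a) / a with hc_def
  have hc : 0 < c := div_pos (by linarith) ha0
  set G : ℝ → ℝ := fun γ => (s - γ) * deriv fΓ γ / fΓ γ with hG_def
  have hfΓne : ∀ γ, fΓ γ ≠ 0 := fun γ => (hfΓpos γ).ne'
  have hfΓdiff : Differentiable ℝ fΓ := hfΓC.differentiable (by norm_num)
  have hftdiff : Differentiable ℝ ft := hftC.differentiable (by norm_num)
  have hfΓ' : ∀ γ, deriv fΓ γ ≤ 0 := fun γ =>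
    deriv_nonpos_aux (hfΓanti.antitoneOn univ) (mem_univ γ) (subset_univ _)
      (hfΓdiff γ).hasDerivAt
  have hft' : ∀ x, 0 ≤ x → deriv ft x ≤ 0 := fun x hx =>
    deriv_nonpos_aux hftanti hx (fun u hu => le_trans hx (le_of_lt hu))
      (hftdiff x).hasDerivAt
  have hG0 : G 0 = s * deriv fΓ 0 := by simp [hG_def, hfΓ0]
  -- positivity of d0
  set e : ℝ := s * deriv fΓ 0 with he_def
  have he : e ≤ 0 := mul_nonpos_of_nonneg_of_nonpos hs.le (hfΓ' 0)
  have h1e : 0 < 1 - e := by linarith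
  set d0 : ℝ := 1 + c * e with hd0_def
  have hαlb : -e < α * ((1 - e) * θmin) :=
    (div_lt_iff₀ (mul_pos h1e hθmin)).mp hαmem.1
  have hkey : 0 < a + (1 - a) * e := by
    have h1 : a * (1 - e) > -e := by rw [ha_def]; nlinarith
    nlinarith
  have hd0 : 0 < d0 := by
    have hrw : d0 = (a + (1 - a) * e) / a := by
      rw [hd0_def, hc_def]; field_simp
    rw [hrw]; exact div_pos hkey ha0
  clear_value a c e d0 G
  -- continuity of derivatives
  have hfΓ'cont : Continuous (deriv fΓ) := by
    have h2 : ContDiff ℝ ((1 : ℕ) + 1) fΓ := by exact_mod_cast hfΓC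
    exact ((contDiff_succ_iff_deriv.mp h2).2.2).continuous
  have hft'cont : Continuous (deriv ft) := (contDiff_one_iff_deriv.mp hftC).2
  have hGcont : Continuous G := by
    rw [hG_def]
    exact ((continuous_const.sub continuous_id).mul hfΓ'cont).div hfΓC.continuous hfΓne
  -- choose δ₀ via continuity of G at 0
  obtain ⟨δ, hδ0, hδ⟩ := Metric.continuousAt_iff.mp (hGcont.continuousAt (x := 0))
      (d0 / (2 * c)) (by positivity)
  set δ₀ : ℝ := δ / 2 with hδ₀_def
  have hδ₀pos : 0 < δ₀ := by positivity
  set d : ℝ := min (d0 / 2) 1 with hd_def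
  have hd : 0 < d := lt_min (by linarith) one_pos
  clear_value δ₀ d
  -- lower bound on the denominator
  have hDenlb : ∀ γ ∈ Icc (-δ₀) s, d ≤ 1 + c * G γ := by
    intro γ hγ
    rcases lt_or_ge γ 0 with hneg | hpos
    · have hdist : dist γ 0 < δ := by
        rw [Real.dist_eq, sub_zero, abs_of_neg hneg]
        have h1 := hγ.1
        rw [hδ₀_def] at h1
        linarith
      have h2 := hδ hdist
      rw [Real.dist_eq] at h2
      have h3 : -(d0 / (2 * c)) < G γ - G 0 := (abs_lt.mp h2).1
      have h4 : c * (d0 / (2 * c)) = d0 / 2 := by field_simp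
      have h5 : 1 + c * G 0 = d0 := by rw [hd0_def, hG0]
      have h6 : 1 + c * G γ > d0 / 2 := by nlinarith
      calc d ≤ d0 / 2 := by rw [hd_def]; exact min_le_left _ _
        _ ≤ 1 + c * G γ := h6.le
    · rcases lt_or_eq_of_le hγ.2 with hlt | heq
      · have hmem : γ ∈ Ico 0 s := ⟨hpos, hlt⟩
        have h0mem : (0 : ℝ) ∈ Ico 0 s := ⟨le_refl 0, hs⟩
        have hG0le : G 0 ≤ G γ := hmono h0mem hmem hpos
        have h5 : 1 + c * G 0 = d0 := by rw [hd0_def, hG0]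
        calc d ≤ d0 / 2 := by rw [hd_def]; exact min_le_left _ _
          _ ≤ d0 := by linarith
          _ ≤ 1 + c * G γ := by nlinarith
      · have hGz : G γ = 0 := by
          rw [hG_def]; simp [heq]
        have h1 : (1 : ℝ) + c * 0 = 1 := by ring
        rw [hGz, h1, hd_def]
        exact min_le_right _ _
  -- compactness bounds on ft, deriv ft
  have hIccne : (Icc τ T).Nonempty := nonempty_Icc.mpr hτT
  have hftpos : ∀ t ∈ Icc τ T, 0 < ft t := fun t ht => (hftmem t (le_trans hτ ht.1)).1
  obtain ⟨tm, htm, hmin⟩ := isCompact_Icc.exists_isMinOn hIccne hftC.continuous.continuousOn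
  set m : ℝ := ft tm with hm_def
  have hm : 0 < m := hftpos tm htm
  have hmle : ∀ u ∈ Icc τ T, m ≤ ft u := fun u hu => hmin hu
  obtain ⟨tM, htM, hmax⟩ := isCompact_Icc.exists_isMaxOn hIccne hft'cont.neg.continuousOn
  set M : ℝ := -deriv ft tM with hM_def
  have hM0 : 0 ≤ M := neg_nonneg.mpr (hft' tM (le_trans hτ htM.1))
  have hMle : ∀ u ∈ Icc τ T, -deriv ft u ≤ M := fun u hu => hmax hu
  set C : ℝ := (1 - a) * M / (a * m * d) with hC_def
  have hC : 0 ≤ C :=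
    div_nonneg (mul_nonneg (by linarith) hM0) (mul_pos (mul_pos ha0 hm) hd).le
  clear_value m M C
  -- closed form of the ODE
  have hcomp : ∀ t ∈ Icc τ T, Γ' t =
      ((1 - a) * (s - Γ t) * (-(deriv ft t))) / (a * ft t * (1 + c * G (Γ t))) := by
    intro t ht
    have hτt : τ ≤ t := ht.1
    have hftt : ft t ≠ 0 := (hftpos t ht).ne'
    have hfΓt : fΓ (Γ t) ≠ 0 := hfΓne _
    have ha : a ≠ 0 := ha0.ne'
    rw [hODE t ht, hZ t (Γ t), if_pos hτt]
    have hden : 1 + ((1 - a) * (s - Γ t)) / (a * ft t * fΓ (Γ t)) * ft t * deriv fΓ (Γ t)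
        = 1 + c * G (Γ t) := by
      rw [hc_def, hG_def]
      exact alg_den _ _ _ _ _ _ ha hftt hfΓt
    have hnum : -(((1 - a) * (s - Γ t)) / (a * ft t * fΓ (Γ t)) * deriv ft t * fΓ (Γ t))
        = ((1 - a) * (s - Γ t) * (-(deriv ft t))) / (a * ft t) := by
      exact alg_num _ _ _ _ _ _ ha hftt hfΓt
    rw [hden, hnum, div_div]
  -- lemma 1 : Γ' ≥ 0 in the region
  have lem1 : ∀ t ∈ Icc τ T, Γ t ∈ Icc (-δ₀) s → 0 ≤ Γ' t := by
    intro t ht hmem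
    rw [hcomp t ht]
    apply div_nonneg
    · exact mul_nonneg (mul_nonneg (by linarith) (by linarith [hmem.2]))
        (neg_nonneg.mpr (hft' t (le_trans hτ ht.1)))
    · have hden := hDenlb (Γ t) hmem
      exact mul_nonneg (mul_nonneg ha0.le (hftpos t ht).le) (by linarith)
  -- lemma 2 : Γ' ≤ C (s - Γ) in the region
  have lem2 : ∀ t ∈ Icc τ T, Γ t ∈ Icc 0 s → Γ' t ≤ C * (s - Γ t) := by
    intro t ht hmem
    have hmem' : Γ t ∈ Icc (-δ₀) s := ⟨le_trans (by linarith) hmem.1, hmem.2⟩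
    have hden := hDenlb (Γ t) hmem'
    have hftt := hftpos t ht
    have hmt := hmle t ht
    have hMt := hMle t ht
    rw [hcomp t ht]
    have hnn : 0 ≤ (1 - a) * (s - Γ t) := mul_nonneg (by linarith) (by linarith [hmem.2])
    have hmd : m * d ≤ ft t * (1 + c * G (Γ t)) := mul_le_mul hmt hden hd.le hftt.le
    have hOne : a * m * d ≤ a * ft t * (1 + c * G (Γ t)) := by
      nlinarith [mul_le_mul_of_nonneg_left hmd ha0.le]
    have hamd : 0 < a * m * d := mul_pos (mul_pos ha0 hm) hd
    calc ((1 - a) * (s - Γ t) * (-(deriv ft t))) / (a * ft t * (1 + c * G (Γ t)))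
        ≤ ((1 - a) * (s - Γ t) * M) / (a * m * d) := by
          apply div_le_div₀ (mul_nonneg hnn hM0) _ hamd hOne
          exact mul_le_mul_of_nonneg_left hMt hnn
      _ = C * (s - Γ t) := by rw [hC_def]; ring
  -- continuity of Γ
  have hΓcont : ContinuousOn Γ (Icc τ T) := fun u hu =>
    ((hderiv u hu).continuousAt).continuousWithinAt
  -- monotonicity on invariant intervals
  have hmonΓ : ∀ t ∈ Icc τ T, (∀ u ∈ Icc τ t, Γ u ∈ Icc (-δ₀) s) → MonotoneOn Γ (Icc τ t) := by
    intro t ht hinv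
    have hsub : Icc τ t ⊆ Icc τ T := Icc_subset_Icc le_rfl ht.2
    apply monotoneOn_of_hasDerivWithinAt_nonneg (f' := Γ') (convex_Icc τ t) (hΓcont.mono hsub)
    · intro u hu
      rw [interior_Icc] at hu
      exact (hderiv u (hsub (Ioo_subset_Icc_self hu))).hasDerivWithinAt
    · intro u hu
      rw [interior_Icc] at hu
      have hu' := Ioo_subset_Icc_self hu
      exact lem1 u (hsub hu') (hinv u hu')
  -- key bound via barrier function
  have hupper : ∀ t ∈ Icc τ T, (∀ u ∈ Icc τ t, Γ u ∈ Icc (-δ₀) s) → 0 ≤ Γ t ∧ Γ t < s := by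
    intro t ht hinv
    have hsub : Icc τ t ⊆ Icc τ T := Icc_subset_Icc le_rfl ht.2
    have hmon := hmonΓ t ht hinv
    have hτmem : τ ∈ Icc τ t := ⟨le_rfl, ht.1⟩
    have htmem : t ∈ Icc τ t := ⟨ht.1, le_rfl⟩
    have hΓ0 : ∀ u ∈ Icc τ t, 0 ≤ Γ u := by
      intro u hu
      have := hmon hτmem hu hu.1
      rwa [hΓτ] at this
    refine ⟨hΓ0 t htmem, ?_⟩
    have hbarmon : MonotoneOn (fun u => (s - Γ u) * Real.exp (C * u)) (Icc τ t) := by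
      apply monotoneOn_of_hasDerivWithinAt_nonneg
        (f' := fun u => (C * (s - Γ u) - Γ' u) * Real.exp (C * u)) (convex_Icc τ t)
      · exact (continuousOn_const.sub (hΓcont.mono hsub)).mul
          ((Real.continuous_exp.comp (continuous_const.mul continuous_id)).continuousOn)
      · intro u hu
        rw [interior_Icc] at hu
        have hu' := hsub (Ioo_subset_Icc_self hu)
        have hd1 : HasDerivAt (fun u => s - Γ u) (-Γ' u) u := by
          rw [← zero_sub]
          exact (hasDerivAt_const u s).sub (hderiv u hu')
        have hd2 : HasDerivAt (fun u => Real.exp (C * u)) (Real.exp (C * u) * C) u := by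
          have := ((hasDerivAt_id u).const_mul C).exp
          simpa using this
        have hprod := hd1.mul hd2
        have : (C * (s - Γ u) - Γ' u) * Real.exp (C * u)
            = -Γ' u * Real.exp (C * u) + (s - Γ u) * (Real.exp (C * u) * C) := by ring
        rw [this]
        exact hprod.hasDerivWithinAt
      · intro u hu
        rw [interior_Icc] at hu
        have hu'' := Ioo_subset_Icc_self hu
        have hu' := hsub hu''
        have hΓmem : Γ u ∈ Icc 0 s := ⟨hΓ0 u hu'', (hinv u hu'').2⟩
        have hle := lem2 u hu' hΓmem
        have hexp : 0 < Real.exp (C * u) := Real.exp_pos _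
        nlinarith
    have hbar := hbarmon hτmem htmem ht.1
    simp only [hΓτ, sub_zero] at hbar
    have h1 : 0 < Real.exp (C * τ) := Real.exp_pos _
    have h2 : 0 < Real.exp (C * t) := Real.exp_pos _
    nlinarith
  -- the invariance argument via sSup
  set A : Set ℝ := {r | r ∈ Icc τ T ∧ ∀ u ∈ Icc τ r, Γ u ∈ Icc (-δ₀) s} with hA_def
  have hτA : τ ∈ A := by
    refine ⟨⟨le_rfl, hτT⟩, fun u hu => ?_⟩
    have : u = τ := le_antisymm hu.2 hu.1
    rw [this, hΓτ]
    exact ⟨by linarith, hs.le⟩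
  have hAne : A.Nonempty := ⟨τ, hτA⟩
  have hbdd : BddAbove A := ⟨T, fun r hr => hr.1.2⟩
  set t₀ : ℝ := sSup A with ht₀_def
  have hτt₀ : τ ≤ t₀ := le_csSup hbdd hτA
  have ht₀T : t₀ ≤ T := csSup_le hAne fun r hr => hr.1.2
  have ht₀Icc : t₀ ∈ Icc τ T := ⟨hτt₀, ht₀T⟩
  have hΓA : ∀ r ∈ A, Γ r ∈ Icc (-δ₀) s := fun r hr => hr.2 r ⟨hr.1.1, le_rfl⟩
  have ht₀A : t₀ ∈ A := by
    refine ⟨ht₀Icc, fun u hu => ?_⟩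
    rcases lt_or_eq_of_le hu.2 with hlt | heq
    · obtain ⟨r, hrA, hur⟩ := exists_lt_of_lt_csSup hAne hlt
      exact hrA.2 u ⟨hu.1, hur.le⟩
    · rw [heq]
      have hcl : t₀ ∈ closure A := csSup_mem_closure hAne hbdd
      have hnb : (nhdsWithin t₀ A).NeBot := mem_closure_iff_nhdsWithin_neBot.mp hcl
      have htd : Filter.Tendsto Γ (nhdsWithin t₀ A) (nhds (Γ t₀)) :=
        ((hderiv t₀ ht₀Icc).continuousAt).continuousWithinAt
      refine isClosed_Icc.mem_of_tendsto htd ?_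
      filter_upwards [self_mem_nhdsWithin] with r hr using hΓA r hr
  have ht₀eq : t₀ = T := by
    by_contra hne
    have ht₀lt : t₀ < T := lt_of_le_of_ne ht₀T hne
    obtain ⟨h0, hlt⟩ := hupper t₀ ht₀Icc ht₀A.2
    have hΓoo : Γ t₀ ∈ Ioo (-δ₀) s := ⟨lt_of_lt_of_le (by linarith) h0, hlt⟩
    have hct : ContinuousAt Γ t₀ := (hderiv t₀ ht₀Icc).continuousAt
    obtain ⟨ε, hε0, hball⟩ :=
      Metric.mem_nhds_iff.mp (hct.preimage_mem_nhds (isOpen_Ioo.mem_nhds hΓoo))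
    set t₁ : ℝ := min (t₀ + ε / 2) T with ht₁_def
    have ht₀t₁ : t₀ < t₁ := lt_min (by linarith) ht₀lt
    have ht₁A : t₁ ∈ A := by
      refine ⟨⟨le_trans hτt₀ ht₀t₁.le, min_le_right _ _⟩, fun u hu => ?_⟩
      rcases le_or_gt u t₀ with h | h
      · exact ht₀A.2 u ⟨hu.1, h⟩
      · have hmem : u ∈ Metric.ball t₀ ε := by
          rw [Metric.mem_ball, Real.dist_eq, abs_of_pos (by linarith)]
          have : u ≤ t₀ + ε / 2 := le_trans hu.2 (min_le_left _ _)
          linarith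
        exact Ioo_subset_Icc_self (hball hmem)
    have := le_csSup hbdd ht₁A
    rw [← ht₀_def] at this
    linarith
  -- conclusion
  intro t ht
  have hinv : ∀ u ∈ Icc τ t, Γ u ∈ Icc (-δ₀) s := fun u hu =>
    ht₀A.2 u ⟨hu.1, by rw [ht₀eq]; exact le_trans hu.2 ht.2⟩
  obtain ⟨h0, hlt⟩ := hupper t ht hinv
  exact ⟨⟨h0, hlt⟩, lem1 t ht ⟨by linarith, hlt.le⟩⟩
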